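/- Let M = (E, I) be a matroid of rank r on a finite ground set E equipped with a strict linear order ≻ on E. Let A be a base of M such that for every x ∈ E \ A, x is the worst element of its fundamental circuit C_A(x), i.e. y ≻ x or y = x for every y ∈ C_A(x) (this characterizes A as the optimal base of the ordered matroid). Let B be a base of M disjoint from A. Then there exists a bijection π : A → B such that for every a ∈ A, a ≻ π(a) and (B \ {π(a)}) ∪ {a} is independent in M. -/

import Mathlib

/-- A circuit of a matroid: an inclusion-wise minimal dependent set. -/
def Matroid.IsCircuit' {α : Type*} (M : Matroid α) (C : Set α) : Prop :=
  M.Dep C ∧ ∀ D ⊂ C, ¬ M.Dep D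

open Set

/-- If `I` is independent and contained in the closure of `X`, then `|I| ≤ |X|`. -/
lemma aux_encard_le {α : Type*} {M : Matroid α} {I X : Set α} (hI : M.Indep I)
    (hIX : I ⊆ M.closure X) : I.encard ≤ X.encard := by
  obtain ⟨J, hJ⟩ := M.exists_isBasis' X
  have hcl : I ⊆ M.closure J := by rw [hJ.closure_eq_closure]; exact hIX
  have hIJ : I.encard ≤ J.encard := by
    by_contra h
    push_neg at h
    obtain ⟨e, he, hei⟩ := hJ.indep.augment hI h
    have := (hJ.indep.insert_indep_iff_of_notMem he.2).mp hei
    exact this.2 (hcl he.1)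
  exact hIJ.trans (Set.encard_mono hJ.subset)

/-- An element of the closure of a finite independent set `B` lies in the closure of
the set of `b ∈ B` whose removal destroys membership. -/
lemma aux_fund {α : Type*} {M : Matroid α} {B : Set α} (hB : M.Indep B) (hBfin : B.Finite)
    {a : α} (ha : a ∈ M.closure B) :
    a ∈ M.closure {b ∈ B | a ∉ M.closure (B \ {b})} := by
  classical
  set FB := hBfin.toFinset with hFB
  have hne : (FB.powerset.filter (fun s : Finset _ => a ∈ M.closure (s : Set _))).Nonempty :=
    ⟨FB, Finset.mem_filter.mpr ⟨Finset.mem_powerset.mpr (subset_refl _), by rwa [hFB, Set.Finite.coe_toFinset]⟩⟩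
  obtain ⟨B', hB'mem, hmin⟩ := Finset.exists_min_image _ Finset.card hne
  rw [Finset.mem_filter, Finset.mem_powerset] at hB'mem
  obtain ⟨hB'sub, hB'cl⟩ := hB'mem
  have hsubB : (↑B' : Set α) ⊆ B := by
    intro b hb
    have : b ∈ FB := hB'sub hb
    rwa [hFB, Set.Finite.mem_toFinset] at this
  have hkey : (↑B' : Set α) ⊆ {b ∈ B | a ∉ M.closure (B \ {b})} := by
    intro b hb
    have hbF : b ∈ B' := hb
    refine ⟨hsubB hb, fun hacl => ?_⟩
    have hlt : (B'.erase b).card < B'.card := Finset.card_erase_lt_of_mem hbF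
    have hnotcl : a ∉ M.closure ↑(B'.erase b) := by
      intro h
      have hmem : B'.erase b ∈ FB.powerset.filter (fun s : Finset _ => a ∈ M.closure (s : Set _)) :=
        Finset.mem_filter.mpr ⟨Finset.mem_powerset.mpr ((Finset.erase_subset _ _).trans hB'sub), h⟩
      exact absurd (hmin _ hmem) (not_le.mpr hlt)
    rw [Finset.coe_erase] at hnotcl
    have hex : a ∈ M.closure (insert b ((↑B' : Set α) \ {b})) \ M.closure ((↑B' : Set α) \ {b}) := by
      refine ⟨?_, hnotcl⟩
      rwa [Set.insert_diff_singleton, Set.insert_eq_of_mem hb]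
    have hb' := Matroid.closure_exchange hex
    have h2 : b ∈ M.closure (B \ {b}) := by
      have hins : M.closure (insert a (B \ {b})) = M.closure (B \ {b}) :=
        M.closure_insert_eq_of_mem_closure hacl
      have hmono : b ∈ M.closure (insert a (B \ {b})) :=
        M.closure_subset_closure (insert_subset_insert (diff_subset_diff_left hsubB)) hb'.1
      rwa [hins] at hmono
    exact hB.notMem_closure_diff_of_mem (hsubB hb) h2
  exact M.closure_subset_closure hkey hB'cl

lemma aux_opt {α : Type*} [LinearOrder α] {M : Matroid α} {A : Set α} (hA : M.IsBase A)
    (hAfin : A.Finite)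
    (hopt : ∀ x ∈ M.E \ A, ∀ Cx : Set α, M.IsCircuit' Cx → Cx ⊆ insert x A →
      ∀ y ∈ Cx, x ≤ y)
    {x : α} (hx : x ∈ M.E \ A) : x ∈ M.closure {y ∈ A | x < y} := by
  classical
  have hxE := hx.1
  have hxA := hx.2
  have hclA : x ∈ M.closure A := by rw [hA.closure_eq]; exact hxE
  set FA := hAfin.toFinset with hFA
  have hne : (FA.powerset.filter (fun s : Finset _ => x ∈ M.closure (s : Set _))).Nonempty :=
    ⟨FA, Finset.mem_filter.mpr ⟨Finset.mem_powerset.mpr (subset_refl _), by rwa [hFA, Set.Finite.coe_toFinset]⟩⟩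
  obtain ⟨A', hA'mem, hmin⟩ := Finset.exists_min_image _ Finset.card hne
  rw [Finset.mem_filter, Finset.mem_powerset] at hA'mem
  obtain ⟨hA'sub, hA'cl⟩ := hA'mem
  have hA'A : (↑A' : Set α) ⊆ A := by
    intro y hy
    have : y ∈ FA := hA'sub hy
    rwa [hFA, Set.Finite.mem_toFinset] at this
  have hA'indep := hA.indep.subset hA'A
  have hxA' : x ∉ (↑A' : Set α) := fun h => hxA (hA'A h)
  set C : Set α := insert x ↑A' with hC
  have hdep : M.Dep C := by
    rw [Matroid.dep_iff]
    refine ⟨fun hi => ?_, insert_subset hxE (hA'A.trans hA.subset_ground)⟩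
    have hni := hi.notMem_closure_diff_of_mem (mem_insert x _)
    rw [hC, Set.insert_diff_self_of_notMem hxA'] at hni
    exact hni hA'cl
  have hmin' : ∀ D ⊂ C, ¬ M.Dep D := by
    intro D hD hDdep
    by_cases hxD : x ∈ D
    · set D' : Set α := D \ {x} with hD'
      have hD'A' : D' ⊆ ↑A' := by
        intro y hy
        rcases hD.subset hy.1 with h | h
        · exact absurd h hy.2
        · exact h
      have hne' : D' ≠ ↑A' := by
        intro h
        apply hD.ne
        rw [hC, ← h, hD', Set.insert_diff_singleton, Set.insert_eq_of_mem hxD]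
      have hssub : D' ⊂ ↑A' := hD'A'.ssubset_of_ne hne'
      have hD'fin : D'.Finite := hAfin.subset (hD'A'.trans hA'A)
      have hxcl : x ∉ M.closure D' := by
        intro h
        set Df := hD'fin.toFinset with hDf
        have hDfA' : Df ⊂ A' := by
          rw [← Finset.coe_ssubset, hDf, Set.Finite.coe_toFinset]
          exact hssub
        have hmem : Df ∈ FA.powerset.filter (fun s : Finset _ => x ∈ M.closure (s : Set _)) := by
          refine Finset.mem_filter.mpr ⟨Finset.mem_powerset.mpr (hDfA'.subset.trans hA'sub), ?_⟩
          rwa [hDf, Set.Finite.coe_toFinset]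
        exact absurd (hmin _ hmem) (not_le.mpr (Finset.card_lt_card hDfA'))
      have hD'indep := hA.indep.subset (hD'A'.trans hA'A)
      have hind : M.Indep (insert x D') := by
        rw [hD'indep.insert_indep_iff_of_notMem (fun h => h.2 rfl)]
        exact ⟨hxE, hxcl⟩
      have hDeq : D = insert x D' := by
        rw [hD', Set.insert_diff_singleton, Set.insert_eq_of_mem hxD]
      rw [hDeq] at hDdep
      exact hDdep.not_indep hind
    · refine hDdep.not_indep (hA'indep.subset (fun y hy => ?_))
      rcases hD.subset hy with h | h
      · exact absurd (h ▸ hy) hxD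
      · exact h
  have hcirc : M.IsCircuit' C := ⟨hdep, hmin'⟩
  have hle := hopt x hx C hcirc (insert_subset_insert hA'A)
  refine M.closure_subset_closure (fun y hy => ?_) hA'cl
  refine ⟨hA'A hy, ?_⟩
  have := hle y (mem_insert_of_mem _ hy)
  exact lt_of_le_of_ne this (fun h => hxA (h ▸ hA'A hy))

/-- Let `M` be a matroid on a finite, linearly ordered ground set, let `A`
be a base such that every `x ∈ E \ A` is the worst element of its fundamental circuit
`C_A(x)` (i.e. `A` is the optimal base), and let `B` be a base disjoint from `A`. Then
there is a bijection `π : A → B` with `a ≻ π a` and `B - π a + a` independent for all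
`a ∈ A`. -/
theorem optimal_base_exchange_matching {α : Type*} [LinearOrder α] (M : Matroid α)
    (hfin : M.E.Finite) (A B : Set α) (hA : M.IsBase A) (hB : M.IsBase B)
    (hAB : Disjoint A B)
    (hopt : ∀ x ∈ M.E \ A, ∀ Cx : Set α, M.IsCircuit' Cx → Cx ⊆ insert x A →
      ∀ y ∈ Cx, x ≤ y) :
    ∃ π : A → B, Function.Bijective π ∧
      ∀ a : A, (π a : α) < (a : α) ∧ M.Indep (insert (a : α) (B \ {(π a : α)})) := by
  classical
  have hAE := hA.subset_ground
  have hBE := hB.subset_ground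
  have hAfin : A.Finite := hfin.subset hAE
  have hBfin : B.Finite := hfin.subset hBE
  set FB := hBfin.toFinset with hFB
  set t : ↥A → Finset α := fun a =>
    FB.filter (fun b => b < (a : α) ∧ M.Indep (insert (a : α) (B \ {b}))) with ht
  have htB : ∀ (a : ↥A) (b : α), b ∈ t a → b ∈ B := by
    intro a b hb
    rw [ht] at hb
    exact (Set.Finite.mem_toFinset _).mp (Finset.mem_filter.mp hb).1
  have hall : ∀ s : Finset ↥A, s.card ≤ (s.biUnion t).card := by
    intro s
    set T := s.biUnion t with hT
    set S : Set α := ↑(s.image (fun a : ↥A => (a : α))) with hS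
    have hSA : S ⊆ A := by
      intro y hy
      rw [hS] at hy
      simp only [Finset.coe_image, Set.mem_image, Finset.mem_coe] at hy
      obtain ⟨a, _, rfl⟩ := hy
      exact a.2
    have hXE : ↑T ∪ (A \ S) ⊆ M.E := by
      refine union_subset ?_ (diff_subset.trans hAE)
      intro b hb
      rw [Finset.mem_coe, hT, Finset.mem_biUnion] at hb
      obtain ⟨a, _, hba⟩ := hb
      exact hBE (htB a b hba)
    have main : ∀ n : ℕ, ∀ a : ↥A, a ∈ s → (A ∩ Set.Ioi (a : α)).ncard < n →
        (a : α) ∈ M.closure (↑T ∪ (A \ S)) := by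
      intro n
      induction n with
      | zero => exact fun a _ h => absurd h (Nat.not_lt_zero _)
      | succ n IH =>
        intro a ha hlt
        have haE : (a : α) ∈ M.E := hAE a.2
        have haB : (a : α) ∉ B := Set.disjoint_left.mp hAB a.2
        have hacl : (a : α) ∈ M.closure B := by rw [hB.closure_eq]; exact haE
        have h1 := aux_fund hB.indep hBfin hacl
        have hsubcl : {b ∈ B | (a : α) ∉ M.closure (B \ {b})} ⊆
            M.closure (↑T ∪ (A \ S)) := by
          intro b hb
          obtain ⟨hbB, hbcl⟩ := hb
          rcases lt_or_ge b (a : α) with hba | hab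
          · have hind : M.Indep (insert (a : α) (B \ {b})) := by
              have hBb : M.Indep (B \ {b}) := hB.indep.subset diff_subset
              rw [hBb.insert_indep_iff_of_notMem (fun h => haB h.1)]
              exact ⟨haE, hbcl⟩
            have hbT : b ∈ T := by
              rw [hT, Finset.mem_biUnion]
              exact ⟨a, ha, by
                rw [ht]
                exact Finset.mem_filter.mpr
                  ⟨(Set.Finite.mem_toFinset _).mpr hbB, hba, hind⟩⟩
            exact M.subset_closure _ hXE (Or.inl hbT)
          · have hab' : (a : α) < b := lt_of_le_of_ne hab (fun h => haB (h ▸ hbB))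
            have hbEA : b ∈ M.E \ A :=
              ⟨hBE hbB, fun h => Set.disjoint_left.mp hAB h hbB⟩
            have h2 := aux_opt hA hAfin hopt hbEA
            refine M.closure_subset_closure_of_subset_closure ?_ h2
            intro y hy
            obtain ⟨hyA, hby⟩ := hy
            have hay : (a : α) < y := hab'.trans hby
            by_cases hyS : y ∈ S
            · rw [hS] at hyS
              simp only [Finset.coe_image, Set.mem_image, Finset.mem_coe] at hyS
              obtain ⟨a', ha's, rfl⟩ := hyS
              refine IH a' ha's ?_
              have hfin2 : (A ∩ Set.Ioi (a : α)).Finite := hAfin.inter_of_left _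
              have hsub2 : A ∩ Set.Ioi (a' : α) ⊆ (A ∩ Set.Ioi (a : α)) \ {(a' : α)} := by
                intro z hz
                exact ⟨⟨hz.1, hay.trans hz.2⟩, fun h => lt_irrefl _ (h ▸ hz.2)⟩
              have hlt2 : (A ∩ Set.Ioi (a' : α)).ncard < (A ∩ Set.Ioi (a : α)).ncard :=
                lt_of_le_of_lt (Set.ncard_le_ncard hsub2 hfin2.diff)
                  (Set.ncard_diff_singleton_lt_of_mem ⟨hyA, hay⟩ hfin2)
              omega
            · exact M.subset_closure _ hXE (Or.inr ⟨hyA, hyS⟩)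
        exact M.closure_subset_closure_of_subset_closure hsubcl h1
    have hAcl : A ⊆ M.closure (↑T ∪ (A \ S)) := by
      intro y hyA
      by_cases hyS : y ∈ S
      · have hyS' := hyS
        rw [hS] at hyS'
        simp only [Finset.coe_image, Set.mem_image, Finset.mem_coe] at hyS'
        obtain ⟨a', ha's, rfl⟩ := hyS'
        exact main _ a' ha's (Nat.lt_succ_self _)
      · exact M.subset_closure _ hXE (Or.inr ⟨hyA, hyS⟩)
    have hcard := aux_encard_le hA.indep hAcl
    have h3 : A.encard = S.encard + (A \ S).encard := by
      rw [add_comm, Set.encard_diff_add_encard_of_subset hSA]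
    have h4 : (↑T ∪ (A \ S) : Set α).encard ≤ (↑T : Set α).encard + (A \ S).encard :=
      Set.encard_union_le _ _
    have hfinAS : (A \ S).encard ≠ ⊤ := hAfin.diff.encard_lt_top.ne
    have h6 : S.encard + (A \ S).encard ≤ (↑T : Set α).encard + (A \ S).encard := by
      rw [← h3]; exact hcard.trans h4
    have h5 : S.encard ≤ (↑T : Set α).encard :=
      (WithTop.add_le_add_iff_right hfinAS).mp h6
    have hScard : S.encard = (s.card : ℕ∞) := by
      rw [hS, Set.encard_coe_eq_coe_finsetCard,
        Finset.card_image_of_injective s Subtype.coe_injective]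
    have hTcard : (↑T : Set α).encard = (T.card : ℕ∞) :=
      Set.encard_coe_eq_coe_finsetCard T
    rw [hScard, hTcard, Nat.cast_le] at h5
    exact h5
  obtain ⟨f, hfinj, hf⟩ := (Finset.all_card_le_biUnion_card_iff_exists_injective t).mp hall
  have hfB : ∀ a : ↥A, f a ∈ B ∧ f a < (a : α) ∧ M.Indep (insert (a : α) (B \ {f a})) := by
    intro a
    have hfa := hf a
    rw [ht, Finset.mem_filter] at hfa
    exact ⟨(Set.Finite.mem_toFinset _).mp hfa.1, hfa.2.1, hfa.2.2⟩
  refine ⟨fun a => ⟨f a, (hfB a).1⟩, ?_, fun a => ⟨(hfB a).2.1, (hfB a).2.2⟩⟩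
  haveI : Fintype ↥A := hAfin.fintype
  haveI : Fintype ↥B := hBfin.fintype
  rw [Fintype.bijective_iff_injective_and_card]
  refine ⟨fun a b hab => hfinj (congrArg Subtype.val hab), ?_⟩
  have hcards : A.encard = B.encard := hA.encard_eq_encard_of_isBase hB
  have hncard : A.ncard = B.ncard := by rw [Set.ncard_def, Set.ncard_def, hcards]
  rw [← Nat.card_coe_set_eq, ← Nat.card_coe_set_eq] at hncard
  simpa [Nat.card_eq_fintype_card] using hncard
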